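/- For a nonzero Gaussian integer γ, the cardinality of the set γQ ∩ ℤ[i] equals |γ|², where Q = [0,1) + i[0,1) is the half-open unit square and γQ = {γq : q ∈ Q}. -/

import Mathlib

local notation "ℤ[i]" => GaussianInt
open Complex

noncomputable def giBasis : Module.Basis (Fin 2) ℤ ℤ[i] :=
  Module.Basis.ofEquivFun
  { toFun := fun m => ![m.re, m.im]
    map_add' := by intro a b; funext i; fin_cases i <;> simp [Zsqrtd.re_add, Zsqrtd.im_add]
    map_smul' := by
      intro z m; funext i
      fin_cases i <;> simp [zsmul_eq_mul, Zsqrtd.re_smul, Zsqrtd.im_smul]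
    invFun := fun v => ⟨v 0, v 1⟩
    left_inv := by intro m; simp
    right_inv := by intro v; funext i; fin_cases i <;> simp }

lemma algNorm_eq (γ : ℤ[i]) : Algebra.norm ℤ γ = γ.norm := by
  rw [Algebra.norm_eq_matrix_det giBasis]
  have h : Algebra.leftMulMatrix giBasis γ = !![γ.re, -γ.im; γ.im, γ.re] := by
    ext i j
    fin_cases i <;> fin_cases j <;>
      simp [Algebra.leftMulMatrix_eq_repr_mul, giBasis, Zsqrtd.re_mul, Zsqrtd.im_mul]
  rw [h, Matrix.det_fin_two_of, Zsqrtd.norm]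
  ring

theorem card_scaled_square_inter_gaussian (γ : ℤ[i]) (hγ : γ ≠ 0) :
    let Q : Set ℂ := {z | 0 ≤ z.re ∧ z.re < 1 ∧ 0 ≤ z.im ∧ z.im < 1}
    let Zi : Set ℂ := {z | ∃ m : ℤ[i], z = (m : ℂ)}
    (Set.ncard (((fun q => (γ : ℂ) * q) '' Q) ∩ Zi) : ℝ) = ‖(γ : ℂ)‖ ^ 2 := by
  intro Q Zi
  have hγC : (γ : ℂ) ≠ 0 := by rwa [Ne, GaussianInt.toComplex_eq_zero]
  set T : Set ℤ[i] := {m | ∃ q ∈ Q, (m : ℂ) = γ * q} with hT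
  -- the set is the image of T under toComplex
  have himg : ((fun q => (γ : ℂ) * q) '' Q) ∩ Zi = (fun m : ℤ[i] => (m : ℂ)) '' T := by
    ext z
    constructor
    · rintro ⟨⟨q, hq, rfl⟩, m, hm⟩
      exact ⟨m, ⟨q, hq, hm.symm⟩, hm.symm⟩
    · rintro ⟨m, ⟨q, hq, hmq⟩, rfl⟩
      exact ⟨⟨q, hq, hmq.symm⟩, m, rfl⟩
  have hinj : Function.Injective (fun m : ℤ[i] => (m : ℂ)) :=
    fun a b h => GaussianInt.toComplex_inj.mp h
  rw [himg, Set.ncard_image_of_injective _ hinj]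
  -- bijection with the quotient
  let I : Ideal ℤ[i] := Ideal.span {γ}
  let f : T → ℤ[i] ⧸ I := fun m => Ideal.Quotient.mk I (m : ℤ[i])
  have hbij : Function.Bijective f := by
    constructor
    · rintro ⟨m, q, hq, hmq⟩ ⟨m', q', hq', hmq'⟩ h
      have hdvd : γ ∣ m - m' := by
        rw [← Ideal.mem_span_singleton]
        exact (Ideal.Quotient.eq (I := I)).mp h
      obtain ⟨c, hc⟩ := hdvd
      have hcC : (c : ℂ) = q - q' := by
        have h1 : (γ : ℂ) * (c : ℂ) = (γ : ℂ) * (q - q') := by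
          rw [← GaussianInt.toComplex_mul, ← hc, GaussianInt.toComplex_sub, hmq, hmq']; ring
        exact mul_left_cancel₀ hγC h1
      have hre : ((c.re : ℤ) : ℝ) = q.re - q'.re := by
        rw [GaussianInt.intCast_re, hcC]; simp
      have him : ((c.im : ℤ) : ℝ) = q.im - q'.im := by
        rw [GaussianInt.intCast_im, hcC]; simp
      obtain ⟨h1, h2, h3, h4⟩ := hq
      obtain ⟨h1', h2', h3', h4'⟩ := hq'
      have hcre : c.re = 0 := by
        have : |((c.re : ℤ) : ℝ)| < 1 := by rw [hre, abs_lt]; constructor <;> linarith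
        have h2 : |c.re| < 1 := by exact_mod_cast this
        rw [abs_lt] at h2; omega
      have hcim : c.im = 0 := by
        have : |((c.im : ℤ) : ℝ)| < 1 := by rw [him, abs_lt]; constructor <;> linarith
        have h2 : |c.im| < 1 := by exact_mod_cast this
        rw [abs_lt] at h2; omega
      have hc0 : c = 0 := Zsqrtd.ext hcre hcim
      have : m = m' := by
        have := hc
        rw [hc0, mul_zero, sub_eq_zero] at this
        exact this
      exact Subtype.ext this
    · intro x
      obtain ⟨m, rfl⟩ := Ideal.Quotient.mk_surjective x
      set q : ℂ := (m : ℂ) / γ with hq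
      set k : ℤ[i] := ⟨⌊q.re⌋, ⌊q.im⌋⟩ with hk
      refine ⟨⟨m - γ * k, q - (k : ℂ), ?_, ?_⟩, ?_⟩
      · have hkre : ((k : ℂ)).re = (⌊q.re⌋ : ℝ) := by rw [hk]; simp [GaussianInt.re_toComplex]
        have hkim : ((k : ℂ)).im = (⌊q.im⌋ : ℝ) := by rw [hk]; simp [GaussianInt.im_toComplex]
        refine ⟨?_, ?_, ?_, ?_⟩ <;>
          simp only [Complex.sub_re, Complex.sub_im, hkre, hkim]
        · exact sub_nonneg.mpr (Int.floor_le _)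
        · have := Int.fract_lt_one q.re; rw [Int.fract] at this; linarith
        · exact sub_nonneg.mpr (Int.floor_le _)
        · have := Int.fract_lt_one q.im; rw [Int.fract] at this; linarith
      · rw [GaussianInt.toComplex_sub, GaussianInt.toComplex_mul, mul_sub]
        congr 1
        rw [hq, mul_div_cancel₀ _ hγC]
      · show Ideal.Quotient.mk I (m - γ * k) = Ideal.Quotient.mk I m
        rw [Ideal.Quotient.eq]
        have : m - γ * k - m = γ * (-k) := by ring
        rw [this]
        exact Ideal.mem_span_singleton.mpr ⟨-k, rfl⟩
  -- count the quotient
  have hfree : Module.Free ℤ ℤ[i] := Module.Free.of_basis giBasis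
  have hfin : Module.Finite ℤ ℤ[i] := Module.Finite.of_basis giBasis
  have hcard : Nat.card T = Nat.card (ℤ[i] ⧸ I) := Nat.card_congr (Equiv.ofBijective f hbij)
  have habs : Nat.card (ℤ[i] ⧸ I) = (Algebra.norm ℤ γ).natAbs := by
    rw [← Submodule.cardQuot_apply, ← Ideal.absNorm_apply, Ideal.absNorm_span_singleton]
  rw [← Nat.card_coe_set_eq, hcard, habs, algNorm_eq]
  have hn : 0 ≤ γ.norm := Zsqrtd.norm_nonneg (by norm_num) γ
  rw [Complex.sq_norm, ← GaussianInt.intCast_real_norm]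
  rw [Nat.cast_natAbs]
  exact_mod_cast congrArg (Int.cast : ℤ → ℝ) (abs_of_nonneg hn)
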